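/- Let Λ be a row-finite k-graph without sources. Then the following are equivalent: (1) for every x ∈ Λ^∞, the shift-equivalence class [x] is a locally closed subset of Λ^∞ in the cylinder topology; (2) for every x ∈ Λ^∞ there exists n ∈ ℕ^k such that every path in x(n)Λ^∞ that is frequently divertable to [x] is shift equivalent to x. -/

import Mathlib

/-- A `k`-graph: a countable small category (objects being identified with their
identity morphisms, so that the morphism set `M` carries everything) together with a
degree functor `d : Λ → ℕ^k` satisfying the unique factorisation property. -/
structure KGraph (k : ℕ) : Type 1 where
  M : Type
  countableM : Countable M
  rng : M → M
  src : M → M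
  comp : M → M → M
  d : M → Fin k → ℕ
  src_src : ∀ a, src (src a) = src a
  rng_src : ∀ a, rng (src a) = src a
  src_rng : ∀ a, src (rng a) = rng a
  rng_rng : ∀ a, rng (rng a) = rng a
  comp_src_self : ∀ a, comp a (src a) = a
  rng_comp_self : ∀ a, comp (rng a) a = a
  rng_comp : ∀ a b, src a = rng b → rng (comp a b) = rng a
  src_comp : ∀ a b, src a = rng b → src (comp a b) = src b
  comp_assoc : ∀ a b c, src a = rng b → src b = rng c →
    comp (comp a b) c = comp a (comp b c)
  d_src : ∀ a, d (src a) = 0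
  d_comp : ∀ a b, src a = rng b → d (comp a b) = d a + d b
  factor : ∀ a (m n : Fin k → ℕ), d a = m + n →
    ∃! p : M × M, src p.1 = rng p.2 ∧ comp p.1 p.2 = a ∧ d p.1 = m ∧ d p.2 = n

namespace KGraph

variable {k : ℕ}

/-- The objects of `Λ`, identified with the identity morphisms. -/
def IsObj (Λ : KGraph k) (v : Λ.M) : Prop := Λ.rng v = v

/-- `Λ` is row-finite: each `vΛ^m` is finite. -/
def RowFinite (Λ : KGraph k) : Prop :=
  ∀ v, Λ.IsObj v → ∀ m : Fin k → ℕ, {a : Λ.M | Λ.rng a = v ∧ Λ.d a = m}.Finite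

/-- `Λ` has no sources: each `vΛ^m` is nonempty. -/
def NoSources (Λ : KGraph k) : Prop :=
  ∀ v, Λ.IsObj v → ∀ m : Fin k → ℕ, ∃ a : Λ.M, Λ.rng a = v ∧ Λ.d a = m

end KGraph

/-- An infinite path of a `k`-graph `Λ`: a degree-preserving functor `x : Ω_k → Λ`,
recorded by its values `seg m n _ = x(m, n)` on the morphisms `(m, n)` (for `m ≤ n`)
of `Ω_k`; the vertex `x(m)` is `seg m m _`. -/
structure InfPath {k : ℕ} (Λ : KGraph k) where
  seg : ∀ m n : Fin k → ℕ, m ≤ n → Λ.M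
  d_seg : ∀ m n (h : m ≤ n), Λ.d (seg m n h) = n - m
  rng_seg : ∀ m n (h : m ≤ n), Λ.rng (seg m n h) = seg m m le_rfl
  src_seg : ∀ m n (h : m ≤ n), Λ.src (seg m n h) = seg n n le_rfl
  comp_seg : ∀ m n p (h1 : m ≤ n) (h2 : n ≤ p),
    Λ.comp (seg m n h1) (seg n p h2) = seg m p (h1.trans h2)

namespace InfPath

variable {k : ℕ} {Λ : KGraph k}

/-- The vertex `x(n)` of an infinite path `x`. -/
def vert (x : InfPath Λ) (n : Fin k → ℕ) : Λ.M := x.seg n n le_rfl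

/-- The shift `σ^p(x)`, given by `σ^p(x)(m, n) = x(m + p, n + p)`. -/
def shift (x : InfPath Λ) (p : Fin k → ℕ) : InfPath Λ where
  seg m n h := x.seg (m + p) (n + p) (add_le_add h le_rfl)
  d_seg m n h := by
    rw [x.d_seg]
    funext i
    simp only [Pi.sub_apply, Pi.add_apply]
    omega
  rng_seg m n h := x.rng_seg _ _ _
  src_seg m n h := x.src_seg _ _ _
  comp_seg m n p' h1 h2 := x.comp_seg _ _ _ _ _

/-- `x` is shift equivalent to `y` with lag `n ∈ ℤ^k`: there are `p, q ∈ ℕ^k` with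
`p - q = n` and `σ^p(x) = σ^q(y)`. -/
def ShiftEquivLag (x y : InfPath Λ) (n : Fin k → ℤ) : Prop :=
  ∃ p q : Fin k → ℕ, (fun i => (p i : ℤ) - (q i : ℤ)) = n ∧ x.shift p = y.shift q

/-- `x` is shift equivalent to `y`. -/
def ShiftEquiv (x y : InfPath Λ) : Prop := ∃ n : Fin k → ℤ, ShiftEquivLag x y n

/-- `x` is frequently divertable to `[y]`: for every `n ∈ ℕ^k` there is a path in
`x(n)Λ^∞` which is shift equivalent to `y`. -/
def FreqDiv (x y : InfPath Λ) : Prop :=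
  ∀ n : Fin k → ℕ, ∃ z : InfPath Λ, z.vert 0 = x.vert n ∧ ShiftEquiv z y

/-- The cylinder topology on `Λ^∞`, generated by the cylinder sets
`Z(α) = {x : x(0, d(α)) = α}` for morphisms `α` of `Λ`. -/
instance : TopologicalSpace (InfPath Λ) :=
  TopologicalSpace.generateFrom
    {S | ∃ a : Λ.M, S = {x : InfPath Λ | x.seg 0 (Λ.d a) zero_le = a}}

end InfPath

namespace KGraph

variable {k : ℕ} (Λ : KGraph k)

lemma sub_aux {m : Fin k → ℕ} {a : Fin k → ℕ} (h : m ≤ a) : a = m + (a - m) := by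
  funext i; have := Pi.le_def.mp h i; simp only [Pi.add_apply, Pi.sub_apply]; omega

/-- canonical factorization of `a` at degree `m ≤ d a`. -/
noncomputable def fs (a : Λ.M) (m : Fin k → ℕ) (h : m ≤ Λ.d a) : Λ.M × Λ.M :=
  (Λ.factor a m (Λ.d a - m) (sub_aux h)).choose

variable {Λ}
variable {a : Λ.M} {m n p : Fin k → ℕ}

lemma fs_spec (h : m ≤ Λ.d a) :
    Λ.src (Λ.fs a m h).1 = Λ.rng (Λ.fs a m h).2 ∧
    Λ.comp (Λ.fs a m h).1 (Λ.fs a m h).2 = a ∧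
    Λ.d (Λ.fs a m h).1 = m ∧ Λ.d (Λ.fs a m h).2 = Λ.d a - m :=
  (Λ.factor a m (Λ.d a - m) (sub_aux h)).choose_spec.1

lemma fs_unique (h : m ≤ Λ.d a) {p q : Λ.M} (h1 : Λ.src p = Λ.rng q)
    (h2 : Λ.comp p q = a) (h3 : Λ.d p = m) : (p, q) = Λ.fs a m h := by
  have hq : Λ.d q = Λ.d a - m := by
    have := Λ.d_comp p q h1
    rw [h2, h3] at this
    funext i; have := congrFun this i; simp only [Pi.add_apply, Pi.sub_apply] at *; omega
  exact (Λ.factor a m (Λ.d a - m) (sub_aux h)).choose_spec.2 (p, q) ⟨h1, h2, h3, hq⟩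

lemma d_fs1 (h : m ≤ Λ.d a) : Λ.d (Λ.fs a m h).1 = m := (fs_spec h).2.2.1

/-- the middle piece of `a` between degrees `m` and `n`. -/
noncomputable def piece {a : Λ.M} {m n : Fin k → ℕ} (h1 : m ≤ n) (h2 : n ≤ Λ.d a) : Λ.M :=
  (Λ.fs (Λ.fs a n h2).1 m (by rw [d_fs1]; exact h1)).2

lemma piece_unique (h1 : m ≤ n) (h2 : n ≤ Λ.d a) {p c s : Λ.M}
    (hdp : Λ.d p = m) (hdc : Λ.d c = n - m)
    (hpc : Λ.src p = Λ.rng c) (hcs : Λ.src c = Λ.rng s)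
    (hcomp : Λ.comp (Λ.comp p c) s = a) : c = piece h1 h2 := by
  have hsrc : Λ.src (Λ.comp p c) = Λ.rng s := by rw [Λ.src_comp p c hpc]; exact hcs
  have hdpc : Λ.d (Λ.comp p c) = n := by
    rw [Λ.d_comp p c hpc, hdp, hdc]
    funext i; have := Pi.le_def.mp h1 i; simp only [Pi.add_apply, Pi.sub_apply]; omega
  have h4 := fs_unique h2 hsrc hcomp hdpc
  have h5 : Λ.comp p c = (Λ.fs a n h2).1 := by rw [← h4]
  have h6 := fs_unique (a := (Λ.fs a n h2).1)
      (by rw [d_fs1]; exact h1) hpc h5 hdp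
  have := congrArg Prod.snd h6
  simpa [piece] using this

lemma d_piece (h1 : m ≤ n) (h2 : n ≤ Λ.d a) : Λ.d (piece h1 h2) = n - m := by
  have h := (fs_spec (a := (Λ.fs a n h2).1) (m := m) (by rw [d_fs1]; exact h1)).2.2.2
  refine h.trans ?_
  rw [d_fs1]

lemma fs1_fs1 (h1 : m ≤ n) (h2 : n ≤ Λ.d a) :
    (Λ.fs (Λ.fs a n h2).1 m (by rw [d_fs1]; exact h1)).1 = (Λ.fs a m (h1.trans h2)).1 := by
  obtain ⟨hsr, hco, hd1, hd2⟩ := fs_spec (a := (Λ.fs a n h2).1) (m := m) (by rw [d_fs1]; exact h1)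
  obtain ⟨hsr', hco', hd1', hd2'⟩ := fs_spec h2
  set p := (Λ.fs (Λ.fs a n h2).1 m (by rw [d_fs1]; exact h1)).1 with hp
  set c := (Λ.fs (Λ.fs a n h2).1 m (by rw [d_fs1]; exact h1)).2 with hc
  have hcs : Λ.src c = Λ.rng (Λ.fs a n h2).2 := by
    have : Λ.src c = Λ.src (Λ.fs a n h2).1 := by
      rw [← hco, Λ.src_comp p c hsr]
    rw [this]; exact hsr'
  have key := fs_unique (a := a) (h1.trans h2) (p := p) (q := Λ.comp c (Λ.fs a n h2).2)
    (by rw [Λ.rng_comp c _ hcs]; exact hsr)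
    (by rw [← Λ.comp_assoc p c _ hsr hcs, hco, hco'])
    hd1
  exact (congrArg Prod.fst key).symm ▸ rfl

lemma comp_fs1_piece (h1 : m ≤ n) (h2 : n ≤ Λ.d a) :
    Λ.comp (Λ.fs a m (h1.trans h2)).1 (piece h1 h2) = (Λ.fs a n h2).1 := by
  have hco := (fs_spec (a := (Λ.fs a n h2).1) (m := m) (by rw [d_fs1]; exact h1)).2.1
  rw [fs1_fs1 h1 h2] at hco
  exact hco

lemma rng_piece_eq (h1 : m ≤ n) (h2 : n ≤ Λ.d a) :
    Λ.rng (piece h1 h2) = Λ.src ((Λ.fs a m (h1.trans h2)).1) := by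
  have hsr := (fs_spec (a := (Λ.fs a n h2).1) (m := m) (by rw [d_fs1]; exact h1)).1
  rw [fs1_fs1 h1 h2] at hsr
  exact hsr.symm

lemma piece_self (hm : m ≤ Λ.d a) :
    piece (le_refl m) hm = Λ.src ((Λ.fs a m hm).1) := by
  obtain ⟨hsr, hco, hd1, hd2⟩ := fs_spec hm
  refine (piece_unique (le_refl m) hm (p := (Λ.fs a m hm).1) (s := (Λ.fs a m hm).2)
    hd1 ?_ ?_ ?_ ?_).symm
  · rw [Λ.d_src]; funext i; simp only [Pi.zero_apply, Pi.sub_apply]; omega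
  · rw [Λ.rng_src]
  · rw [Λ.src_src]; exact hsr
  · rw [Λ.comp_src_self, hco]

lemma rng_piece (h1 : m ≤ n) (h2 : n ≤ Λ.d a) :
    Λ.rng (piece h1 h2) = piece (le_refl m) (h1.trans h2) := by
  rw [rng_piece_eq h1 h2, piece_self (h1.trans h2)]

lemma src_piece (h1 : m ≤ n) (h2 : n ≤ Λ.d a) :
    Λ.src (piece h1 h2) = piece (le_refl n) h2 := by
  have hco := (fs_spec (a := (Λ.fs a n h2).1) (m := m) (by rw [d_fs1]; exact h1)).2.1
  have hsr := (fs_spec (a := (Λ.fs a n h2).1) (m := m) (by rw [d_fs1]; exact h1)).1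
  have : Λ.src (piece h1 h2) = Λ.src ((Λ.fs a n h2).1) := by
    conv_rhs => rw [← hco]
    rw [Λ.src_comp _ _ hsr]
    rfl
  rw [this, piece_self h2]

lemma comp_piece (h1 : m ≤ n) (h2 : n ≤ p) (h3 : p ≤ Λ.d a) :
    Λ.comp (piece h1 (h2.trans h3)) (piece h2 h3) = piece (h1.trans h2) h3 := by
  have hmid : Λ.src (piece h1 (h2.trans h3)) = Λ.rng (piece h2 h3) := by
    rw [src_piece, rng_piece]
  refine piece_unique (h1.trans h2) h3 (p := (Λ.fs a m ((h1.trans h2).trans h3)).1)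
    (s := (Λ.fs a p h3).2) (d_fs1 _) ?_ ?_ ?_ ?_
  · rw [Λ.d_comp _ _ hmid, d_piece, d_piece]
    funext i
    have i1 := Pi.le_def.mp h1 i; have i2 := Pi.le_def.mp h2 i
    simp only [Pi.add_apply, Pi.sub_apply]; omega
  · rw [Λ.rng_comp _ _ hmid, ← rng_piece_eq h1 (h2.trans h3)]
  · rw [Λ.src_comp _ _ hmid, src_piece h2 h3, piece_self h3]
    exact (fs_spec h3).1
  · rw [← Λ.comp_assoc _ _ _ (by rw [← rng_piece_eq h1 (h2.trans h3)]) hmid,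
      comp_fs1_piece h1 (h2.trans h3)]
    rw [comp_fs1_piece h2 h3]
    exact (fs_spec h3).2.1

lemma piece_extend {b : Λ.M} (hb : Λ.src a = Λ.rng b) (h1 : m ≤ n) (h2 : n ≤ Λ.d a)
    (h2' : n ≤ Λ.d (Λ.comp a b)) :
    piece (a := Λ.comp a b) h1 h2' = piece h1 h2 := by
  obtain ⟨hsr, hco, hd1, hd2⟩ := fs_spec h2
  have hsb : Λ.src (Λ.fs a n h2).2 = Λ.rng b := by
    have : Λ.src a = Λ.src (Λ.fs a n h2).2 := by
      conv_lhs => rw [← hco]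
      rw [Λ.src_comp _ _ hsr]
    rw [← this]; exact hb
  symm
  refine piece_unique h1 h2' (p := (Λ.fs a m (h1.trans h2)).1)
    (s := Λ.comp (Λ.fs a n h2).2 b) (d_fs1 _) (d_piece h1 h2) ?_ ?_ ?_
  · rw [← rng_piece_eq h1 h2]
  · rw [Λ.rng_comp _ _ hsb, src_piece h1 h2, piece_self h2]
    exact hsr
  · rw [comp_fs1_piece h1 h2, ← Λ.comp_assoc _ _ _ hsr hsb, hco]

lemma piece_congr {a a' : Λ.M} (ha : a = a') (h1 : m ≤ n) (h2 : n ≤ Λ.d a)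
    (h2' : n ≤ Λ.d a') : piece h1 h2 = piece h1 h2' := by subst ha; rfl

end KGraph

namespace InfPath

variable {k : ℕ} {Λ : KGraph k}

lemma ext' {x y : InfPath Λ} (h : ∀ m n hh, x.seg m n hh = y.seg m n hh) : x = y := by
  cases x with
  | mk xs xd xr xsr xc =>
    cases y with
    | mk ys yd yr ysr yc =>
      have : xs = ys := by funext m n hh; exact h m n hh
      subst this
      rfl

lemma seg_congr (x : InfPath Λ) {m n m' n' : Fin k → ℕ} (hm : m = m') (hn : n = n')
    (h : m ≤ n) (h' : m' ≤ n') : x.seg m n h = x.seg m' n' h' := by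
  subst hm; subst hn; rfl

lemma shift_shift (x : InfPath Λ) (p q : Fin k → ℕ) :
    (x.shift p).shift q = x.shift (p + q) := by
  apply ext'
  intro m n hh
  exact seg_congr x (by ring) (by ring) _ _

lemma se_refl (x : InfPath Λ) : ShiftEquiv x x :=
  ⟨0, 0, 0, by funext i; simp, rfl⟩

lemma se_symm {x y : InfPath Λ} (h : ShiftEquiv x y) : ShiftEquiv y x := by
  obtain ⟨n, p, q, hn, hpq⟩ := h
  exact ⟨-n, q, p, by rw [← hn]; funext i; simp, hpq.symm⟩

lemma se_trans {x y z : InfPath Λ} (h : ShiftEquiv x y) (h' : ShiftEquiv y z) :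
    ShiftEquiv x z := by
  obtain ⟨n, p, q, hn, hpq⟩ := h
  obtain ⟨n', p', q', hn', hpq'⟩ := h'
  refine ⟨_, p + p', q' + q, rfl, ?_⟩
  calc x.shift (p + p') = (x.shift p).shift p' := (shift_shift x p p').symm
    _ = (y.shift q).shift p' := by rw [hpq]
    _ = y.shift (q + p') := shift_shift y q p'
    _ = y.shift (p' + q) := by rw [add_comm]
    _ = (y.shift p').shift q := (shift_shift y p' q).symm
    _ = (z.shift q').shift q := by rw [hpq']
    _ = z.shift (q' + q) := shift_shift z q' q

lemma se_shift (x : InfPath Λ) (p : Fin k → ℕ) : ShiftEquiv x (x.shift p) := by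
  refine ⟨fun i => (p i : ℤ), p, 0, by funext i; simp, ?_⟩
  rw [shift_shift, add_zero]

end InfPath

namespace InfPath

variable {k : ℕ} {Λ : KGraph k}

/-- `α` followed by the whole initial segment of `y` up to `n`. -/
def L (α : Λ.M) (y : InfPath Λ) (n : Fin k → ℕ) : Λ.M :=
  Λ.comp α (y.seg 0 n zero_le)

variable {α : Λ.M} {y : InfPath Λ}

lemma hαy (h : Λ.src α = y.vert 0) (n : Fin k → ℕ) :
    Λ.src α = Λ.rng (y.seg 0 n zero_le) := by
  rw [y.rng_seg]; exact h

lemma L_d (h : Λ.src α = y.vert 0) (n : Fin k → ℕ) :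
    Λ.d (L α y n) = Λ.d α + n := by
  rw [L, Λ.d_comp _ _ (hαy h n), y.d_seg, tsub_zero]

lemma L_le (h : Λ.src α = y.vert 0) (n : Fin k → ℕ) : n ≤ Λ.d (L α y n) := by
  rw [L_d h n]; exact le_add_self

lemma L_src (h : Λ.src α = y.vert 0) (n : Fin k → ℕ) :
    Λ.src (L α y n) = y.vert n := by
  rw [L, Λ.src_comp _ _ (hαy h n), y.src_seg]; rfl

lemma L_step (h : Λ.src α = y.vert 0) {m n : Fin k → ℕ} (hmn : m ≤ n) :
    L α y n = Λ.comp (L α y m) (y.seg m n hmn) := by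
  have h1 : Λ.src (y.seg 0 m zero_le) = Λ.rng (y.seg m n hmn) := by
    rw [y.src_seg, y.rng_seg]
  rw [L, L, Λ.comp_assoc _ _ _ (hαy h m) h1, y.comp_seg]

lemma L_rng_step (h : Λ.src α = y.vert 0) {m n : Fin k → ℕ} (hmn : m ≤ n) :
    Λ.src (L α y m) = Λ.rng (y.seg m n hmn) := by
  rw [L_src h m, y.rng_seg]; rfl

/-- Prepend a morphism `α` to an infinite path `y` with `src α = y(0)`. -/
noncomputable def prepend (α : Λ.M) (y : InfPath Λ) (h : Λ.src α = y.vert 0) :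
    InfPath Λ where
  seg m n hm := KGraph.piece (a := L α y n) hm (L_le h n)
  d_seg m n hm := KGraph.d_piece hm (L_le h n)
  rng_seg m n hm := by
    rw [KGraph.rng_piece]
    exact (KGraph.piece_congr (L_step h hm) _ _
      (by rw [← L_step h hm]; exact (le_refl m).trans ((Pi.le_def.mpr (by
        intro i; have := Pi.le_def.mp hm i; exact this)).trans (L_le h n)))).trans
      (KGraph.piece_extend (L_rng_step h hm) (le_refl m) (L_le h m) _)
  src_seg m n hm := KGraph.src_piece hm (L_le h n)
  comp_seg m n p h1 h2 := by
    show Λ.comp (KGraph.piece h1 (L_le h n)) (KGraph.piece h2 (L_le h p))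
      = KGraph.piece (h1.trans h2) (L_le h p)
    have e : KGraph.piece (a := L α y n) h1 (L_le h n)
        = KGraph.piece (a := L α y p) h1 (h2.trans (L_le h p)) := by
      exact ((KGraph.piece_extend (L_rng_step h h2) h1 (L_le h n)
        (by rw [← L_step h h2]; exact h2.trans (L_le h p))).symm).trans
        (KGraph.piece_congr (L_step h h2).symm h1 _ _)
    rw [e]
    exact KGraph.comp_piece h1 h2 (L_le h p)

end InfPath

namespace InfPath

variable {k : ℕ} {Λ : KGraph k} {α : Λ.M} {y : InfPath Λ}

lemma prepend_seg_eq (h : Λ.src α = y.vert 0) {n : Fin k → ℕ} (hn : Λ.d α = n) :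
    (prepend α y h).seg 0 n zero_le = α := by
  subst hn
  show KGraph.piece zero_le (L_le h (Λ.d α)) = α
  symm
  refine KGraph.piece_unique zero_le (L_le h (Λ.d α)) (p := Λ.rng α)
    (s := y.seg 0 (Λ.d α) zero_le) ?_ ?_ ?_ ?_ ?_
  · have h1 : Λ.src (Λ.rng α) = Λ.rng α := Λ.src_rng α
    calc Λ.d (Λ.rng α) = Λ.d (Λ.src (Λ.rng α)) := by rw [h1]
      _ = 0 := Λ.d_src _
  · rw [tsub_zero]
  · exact Λ.src_rng α
  · exact hαy h (Λ.d α)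
  · rw [Λ.rng_comp_self]; rfl

lemma prepend_shift (h : Λ.src α = y.vert 0) {N : Fin k → ℕ} (hN : Λ.d α = N) :
    (prepend α y h).shift N = y := by
  subst hN
  apply ext'
  intro m n hh
  show KGraph.piece (add_le_add hh le_rfl) (L_le h (n + Λ.d α)) = y.seg m n hh
  symm
  refine KGraph.piece_unique _ _ (p := L α y m) (s := y.seg n (n + Λ.d α) le_self_add)
    ?_ ?_ ?_ ?_ ?_
  · rw [L_d h m]; ring
  · rw [y.d_seg]
    funext i
    simp only [Pi.sub_apply, Pi.add_apply]
    omega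
  · exact L_rng_step h hh
  · rw [y.src_seg, y.rng_seg]
  · rw [← L_step h hh, ← L_step h le_self_add]

lemma prepend_vert_zero (h : Λ.src α = y.vert 0) :
    (prepend α y h).vert 0 = Λ.rng α := by
  have h1 := (prepend α y h).rng_seg 0 (Λ.d α) zero_le
  rw [prepend_seg_eq h rfl] at h1
  exact h1.symm

end InfPath

namespace InfPath

variable {k : ℕ} {Λ : KGraph k}

/-- The cylinder determined by the initial segment of `z` up to `n`. -/
def Zn (z : InfPath Λ) (n : Fin k → ℕ) : Set (InfPath Λ) :=
  {w | w.seg 0 n zero_le = z.seg 0 n zero_le}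

lemma isOpen_Zn (z : InfPath Λ) (n : Fin k → ℕ) : IsOpen (Zn z n) := by
  have hd : Λ.d (z.seg 0 n zero_le) = n := by rw [z.d_seg]; exact tsub_zero n
  have he : Zn z n = {x : InfPath Λ |
      x.seg 0 (Λ.d (z.seg 0 n zero_le)) zero_le = z.seg 0 n zero_le} := by
    ext w
    simp only [Zn, Set.mem_setOf_eq]
    rw [seg_congr w rfl hd zero_le zero_le]
  rw [he]
  exact TopologicalSpace.GenerateOpen.basic _ ⟨_, rfl⟩

lemma seg_prefix {x y : InfPath Λ} {n N : Fin k → ℕ} (hnN : n ≤ N)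
    (hseg : y.seg 0 N zero_le = x.seg 0 N zero_le) :
    y.seg 0 n zero_le = x.seg 0 n zero_le := by
  have h2 : n ≤ Λ.d (x.seg 0 N zero_le) := by rw [x.d_seg, tsub_zero]; exact hnN
  have e1 := KGraph.fs_unique (a := x.seg 0 N zero_le) h2 (p := y.seg 0 n zero_le)
    (q := y.seg n N hnN)
    (by rw [y.src_seg, y.rng_seg])
    (by rw [y.comp_seg]; exact hseg)
    (by rw [y.d_seg, tsub_zero])
  have e2 := KGraph.fs_unique (a := x.seg 0 N zero_le) h2 (p := x.seg 0 n zero_le)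
    (q := x.seg n N hnN)
    (by rw [x.src_seg, x.rng_seg])
    (by rw [x.comp_seg])
    (by rw [x.d_seg, tsub_zero])
  exact congrArg Prod.fst (e1.trans e2.symm)

lemma vert_of_seg_eq {x y : InfPath Λ} {n : Fin k → ℕ}
    (hseg : y.seg 0 n zero_le = x.seg 0 n zero_le) : y.vert n = x.vert n := by
  have h1 := y.src_seg 0 n zero_le
  have h2 := x.src_seg 0 n zero_le
  rw [hseg] at h1
  exact h1.symm.trans h2

lemma exists_basis {U : Set (InfPath Λ)} (hU : IsOpen U) :
    ∀ x ∈ U, ∃ n : Fin k → ℕ, ∀ y : InfPath Λ,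
      y.seg 0 n zero_le = x.seg 0 n zero_le → y ∈ U := by
  have hU' : TopologicalSpace.GenerateOpen
      {S | ∃ a : Λ.M, S = {x : InfPath Λ | x.seg 0 (Λ.d a) zero_le = a}} U := hU
  clear hU
  induction hU' with
  | basic S hS =>
    obtain ⟨a, rfl⟩ := hS
    intro x hx
    exact ⟨Λ.d a, fun y hy => hy.trans hx⟩
  | univ => exact fun x _ => ⟨0, fun y _ => trivial⟩
  | inter S T hS hT ihS ihT =>
    intro x hx
    obtain ⟨n1, h1⟩ := ihS x hx.1
    obtain ⟨n2, h2⟩ := ihT x hx.2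
    exact ⟨n1 ⊔ n2, fun y hy =>
      ⟨h1 y (seg_prefix le_sup_left hy), h2 y (seg_prefix le_sup_right hy)⟩⟩
  | sUnion S hS ih =>
    intro x hx
    obtain ⟨t, ht, hxt⟩ := hx
    obtain ⟨n, hn⟩ := ih t ht x hxt
    exact ⟨n, fun y hy => ⟨t, ht, hn y hy⟩⟩

lemma mem_closure_iff_freqDiv {x z : InfPath Λ} :
    z ∈ closure {w : InfPath Λ | ShiftEquiv w x} ↔ FreqDiv z x := by
  constructor
  · intro hz n
    obtain ⟨w, hw1, hw2⟩ := mem_closure_iff.mp hz (Zn z n) (isOpen_Zn z n) rfl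
    refine ⟨w.shift n, ?_, se_trans (se_symm (se_shift w n)) hw2⟩
    have : (w.shift n).vert 0 = w.vert (0 + n) := rfl
    rw [this, show (0 : Fin k → ℕ) + n = n from zero_add n]
    exact vert_of_seg_eq hw1
  · intro hfd
    rw [mem_closure_iff]
    intro o ho hzo
    obtain ⟨n, hn⟩ := exists_basis ho z hzo
    obtain ⟨w, hw0, hwx⟩ := hfd n
    have hsrc : Λ.src (z.seg 0 n zero_le) = w.vert 0 := by
      rw [z.src_seg]; exact hw0.symm
    have hd : Λ.d (z.seg 0 n zero_le) = n := by rw [z.d_seg]; exact tsub_zero n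
    refine ⟨prepend (z.seg 0 n zero_le) w hsrc, hn _ (prepend_seg_eq hsrc hd), ?_⟩
    have hs := prepend_shift hsrc hd
    have h2 := se_shift (prepend (z.seg 0 n zero_le) w hsrc) n
    rw [hs] at h2
    exact se_trans h2 hwx

end InfPath

open InfPath

/-- For a row-finite `k`-graph `Λ` without sources, the following are equivalent:
(1) every shift-equivalence class `[x]` is locally closed in `Λ^∞` (cylinder topology);
(2) for every `x ∈ Λ^∞` there is `n ∈ ℕ^k` such that every path in `x(n)Λ^∞` that is
frequently divertable to `[x]` is shift equivalent to `x`. -/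
theorem stmt9 {k : ℕ} (hk : 1 ≤ k) (Λ : KGraph k) (hrf : Λ.RowFinite)
    (hns : Λ.NoSources) :
    (∀ x : InfPath Λ, IsLocallyClosed {z : InfPath Λ | InfPath.ShiftEquiv z x}) ↔
    (∀ x : InfPath Λ, ∃ n : Fin k → ℕ, ∀ y : InfPath Λ, y.vert 0 = x.vert n →
      InfPath.FreqDiv y x → InfPath.ShiftEquiv y x) := by
  constructor
  · intro hLC x
    obtain ⟨U, V, hU, hV, hUV⟩ := hLC x
    have hxU : x ∈ U := by
      have hx : x ∈ {z : InfPath Λ | ShiftEquiv z x} := se_refl x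
      rw [hUV] at hx
      exact hx.1
    obtain ⟨n, hn⟩ := exists_basis hU x hxU
    refine ⟨n, fun y hy0 hfd => ?_⟩
    have hsrc : Λ.src (x.seg 0 n zero_le) = y.vert 0 := by
      rw [x.src_seg]; exact hy0.symm
    have hdn : Λ.d (x.seg 0 n zero_le) = n := by rw [x.d_seg]; exact tsub_zero n
    set w := prepend (x.seg 0 n zero_le) y hsrc with hwdef
    have hwU : w ∈ U := hn w (prepend_seg_eq hsrc hdn)
    have hws : w.shift n = y := prepend_shift hsrc hdn
    have hfw : FreqDiv w x := by
      intro m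
      set m' := (m ⊔ n) - n with hm'
      have hmn : m ≤ m' + n := by
        rw [Pi.le_def]
        intro i
        simp only [hm', Pi.add_apply, Pi.sub_apply, Pi.sup_apply]
        omega
      obtain ⟨u, hu0, hux⟩ := hfd m'
      have hvm : w.vert (m' + n) = y.vert m' := by rw [← hws]; rfl
      have hsrc2 : Λ.src (w.seg m (m' + n) hmn) = u.vert 0 := by
        rw [w.src_seg]
        exact (hvm.trans hu0.symm)
      refine ⟨prepend (w.seg m (m' + n) hmn) u hsrc2, ?_, ?_⟩
      · rw [prepend_vert_zero hsrc2, w.rng_seg]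
        rfl
      · have hs := prepend_shift hsrc2 (rfl : Λ.d (w.seg m (m' + n) hmn) = _)
        have h2 := se_shift (prepend (w.seg m (m' + n) hmn) u hsrc2)
          (Λ.d (w.seg m (m' + n) hmn))
        rw [hs] at h2
        exact se_trans h2 hux
    have hwV : w ∈ V :=
      closure_minimal (fun z hz => (hUV ▸ hz : z ∈ U ∩ V).2) hV
        (mem_closure_iff_freqDiv.mpr hfw)
    have hwS : ShiftEquiv w x := by
      have : w ∈ U ∩ V := ⟨hwU, hwV⟩
      rw [← hUV] at this
      exact this
    rw [← hws]
    exact se_trans (se_symm (se_shift w n)) hwS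
  · intro hyp x
    have key : ∀ z ∈ {z : InfPath Λ | ShiftEquiv z x}, ∃ m : Fin k → ℕ,
        ∀ w : InfPath Λ, w.seg 0 m zero_le = z.seg 0 m zero_le →
          FreqDiv w x → ShiftEquiv w x := by
      intro z hz
      obtain ⟨_, p, q, _, hσ⟩ := hz
      obtain ⟨n₀, H⟩ := hyp (x.shift q)
      refine ⟨p + n₀, fun w hw hfd => ?_⟩
      have hy0 : (w.shift (p + n₀)).vert 0 = (x.shift q).vert n₀ := by
        have e1 : (w.shift (p + n₀)).vert 0 = w.vert (0 + (p + n₀)) := rfl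
        have e2 : w.vert (0 + (p + n₀)) = w.vert (p + n₀) := by rw [zero_add]
        have e3 : w.vert (p + n₀) = z.vert (p + n₀) := vert_of_seg_eq hw
        have e4 : z.vert (p + n₀) = (z.shift p).vert n₀ := by
          show z.vert (p + n₀) = z.vert (n₀ + p)
          rw [add_comm]
        rw [e1, e2, e3, e4, hσ]
      have hfy : FreqDiv (w.shift (p + n₀)) (x.shift q) := by
        intro m
        obtain ⟨u, hu0, hux⟩ := hfd (m + (p + n₀))
        exact ⟨u, hu0, se_trans hux (se_shift x q)⟩
      have hyx' := H (w.shift (p + n₀)) hy0 hfy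
      exact se_trans (se_shift w (p + n₀))
        (se_trans hyx' (se_symm (se_shift x q)))
    choose mfun hm using key
    refine ⟨⋃ (z : InfPath Λ) (hz : z ∈ {z : InfPath Λ | ShiftEquiv z x}),
      Zn z (mfun z hz), closure {z : InfPath Λ | ShiftEquiv z x},
      isOpen_iUnion fun z => isOpen_iUnion fun hz => isOpen_Zn z _,
      isClosed_closure, ?_⟩
    ext w
    constructor
    · intro hw
      exact ⟨Set.mem_iUnion.mpr ⟨w, Set.mem_iUnion.mpr ⟨hw, rfl⟩⟩, subset_closure hw⟩
    · rintro ⟨hw1, hw2⟩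
      obtain ⟨z, hz⟩ := Set.mem_iUnion.mp hw1
      obtain ⟨hzx, hwz⟩ := Set.mem_iUnion.mp hz
      exact hm z hzx w hwz (mem_closure_iff_freqDiv.mp hw2)
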